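/- For every dimension d ≥ 1 and every natural number s ≥ 1, the combined ℓ¹–ℓ² constraint set is contained in twice the convex hull of the s-sparse unit-ball vectors: {z ∈ ℝ^d : ‖z‖₁ ≤ √s, ‖z‖₂ ≤ 1} ⊆ 2 · conv(S_{d,s}), where S_{d,s} := {z ∈ ℝ^d : ‖z‖₀ ≤ s, ‖z‖₂ ≤ 1} and 2 · conv(S_{d,s}) = {2w : w ∈ conv(S_{d,s})}. -/

import Mathlib

open Pointwise

/-- The ℓ¹-norm of a vector `z ∈ ℝ^d`: `‖z‖₁ = ∑ⱼ |zⱼ|`. -/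
noncomputable def l1Norm {d : ℕ} (z : Fin d → ℝ) : ℝ := ∑ j, |z j|

/-- The ℓ²-norm of a vector `z ∈ ℝ^d`: `‖z‖₂ = (∑ⱼ |zⱼ|²)^{1/2}`. -/
noncomputable def l2Norm {d : ℕ} (z : Fin d → ℝ) : ℝ := Real.sqrt (∑ j, (z j) ^ 2)

/-- The "ℓ⁰-norm" of a vector `z ∈ ℝ^d`: the number of non-zero entries of `z`. -/
noncomputable def l0Norm {d : ℕ} (z : Fin d → ℝ) : ℕ := Set.ncard {j | z j ≠ 0}

/-- `S_{d,s}`: the set of `s`-sparse vectors in the Euclidean unit ball. -/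
def sparseBall (d s : ℕ) : Set (Fin d → ℝ) :=
  {z | l0Norm z ≤ s ∧ l2Norm z ≤ 1}

open Finset

lemma l0Norm_eq {d : ℕ} (v : Fin d → ℝ) :
    l0Norm v = (univ.filter (fun j => v j ≠ 0)).card := by
  rw [l0Norm, show {j | v j ≠ 0} = ↑(univ.filter (fun j => v j ≠ 0)) by ext j; simp]
  exact Set.ncard_coe_finset _

lemma mem_sparseBall_of {d s : ℕ} {v : Fin d → ℝ}
    (h0 : (univ.filter (fun j => v j ≠ 0)).card ≤ s)
    (h2 : ∑ j, v j ^ 2 ≤ 1) : v ∈ sparseBall d s :=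
  ⟨by rw [l0Norm_eq]; exact h0, Real.sqrt_le_one.mpr h2⟩

/-- a nonnegative vector with entries bounded by `t` and ℓ¹-norm at most `s·t`
lies in the convex hull of the sparse ball (when `s·t² ≤ 1`). -/
lemma aux_nonneg {d : ℕ} (s : ℕ) {t : ℝ} (ht : 0 < t) (hst : (s : ℝ) * t ^ 2 ≤ 1) :
    ∀ m : ℕ, ∀ v : Fin d → ℝ, (∀ j, 0 ≤ v j) → (∀ j, v j ≤ t) →
      (∑ j, v j) ≤ (s : ℝ) * t →
      (univ.filter (fun j => 0 < v j ∧ v j < t)).card ≤ m →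
      v ∈ convexHull ℝ (sparseBall d s) := by
  intro m
  induction m with
  | zero =>
    intro v h0 h1 hsum hcard
    -- no fractional coordinates: every nonzero entry equals t
    set N := univ.filter (fun j => v j ≠ 0) with hN
    have hNt : ∀ j ∈ N, v j = t := by
      intro j hj
      simp only [hN, mem_filter] at hj
      have hpos : 0 < v j := lt_of_le_of_ne (h0 j) (Ne.symm hj.2)
      by_contra hne
      have : (univ.filter (fun j => 0 < v j ∧ v j < t)).card = 0 := Nat.le_zero.mp hcard
      rw [Finset.card_eq_zero] at this
      have : j ∈ univ.filter (fun j => 0 < v j ∧ v j < t) := by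
        simp [hpos, lt_of_le_of_ne (h1 j) hne]
      simp [‹_ = ∅›] at this
    have hsum' : (N.card : ℝ) * t ≤ (s : ℝ) * t := by
      calc (N.card : ℝ) * t = ∑ j ∈ N, v j := by
            rw [Finset.sum_congr rfl hNt]; simp [mul_comm]
        _ = ∑ j, v j := by
            apply Finset.sum_subset N.subset_univ
            intro x _ hx
            simp only [hN, mem_filter, mem_univ, true_and, not_not] at hx
            exact hx
        _ ≤ (s : ℝ) * t := hsum
    have hNs : N.card ≤ s := by
      have := le_of_mul_le_mul_right hsum' ht
      exact_mod_cast this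
    apply subset_convexHull
    apply mem_sparseBall_of hNs
    calc ∑ j, v j ^ 2 = ∑ j ∈ N, v j ^ 2 := by
          symm
          apply Finset.sum_subset N.subset_univ
          intro x _ hx
          simp only [hN, mem_filter, mem_univ, true_and, not_not] at hx
          simp [hx]
      _ = (N.card : ℝ) * t ^ 2 := by
          rw [Finset.sum_congr rfl (fun j hj => by rw [hNt j hj])]; simp [mul_comm]
      _ ≤ (s : ℝ) * t ^ 2 := by
          apply mul_le_mul_of_nonneg_right _ (sq_nonneg t)
          exact_mod_cast hNs
      _ ≤ 1 := hst
  | succ m ih =>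
    intro v h0 h1 hsum hcard
    set N := univ.filter (fun j => v j ≠ 0) with hN
    set F := univ.filter (fun j => 0 < v j ∧ v j < t) with hF
    by_cases hNs : N.card ≤ s
    · -- v itself is sparse
      apply subset_convexHull
      apply mem_sparseBall_of hNs
      calc ∑ j, v j ^ 2 = ∑ j ∈ N, v j ^ 2 := by
            symm
            apply Finset.sum_subset N.subset_univ
            intro x _ hx
            simp only [hN, mem_filter, mem_univ, true_and, not_not] at hx
            simp [hx]
        _ ≤ ∑ j ∈ N, t ^ 2 := by
            apply Finset.sum_le_sum
            intro j _
            exact pow_le_pow_left₀ (h0 j) (h1 j) 2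
        _ = (N.card : ℝ) * t ^ 2 := by simp [mul_comm]
        _ ≤ (s : ℝ) * t ^ 2 := by
            apply mul_le_mul_of_nonneg_right _ (sq_nonneg t)
            exact_mod_cast hNs
        _ ≤ 1 := hst
    · push_neg at hNs
      have hFN : F ⊆ N := by
        intro j hj
        simp only [hF, mem_filter] at hj
        simp [hN, ne_of_gt hj.2.1]
      have hNFt : ∀ j ∈ N \ F, v j = t := by
        intro j hj
        simp only [hN, hF, mem_sdiff, mem_filter, mem_univ, true_and] at hj
        have hpos : 0 < v j := lt_of_le_of_ne (h0 j) (Ne.symm hj.1)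
        rcases not_and_or.mp hj.2 with h | h
        · exact absurd hpos h
        · exact le_antisymm (h1 j) (le_of_not_gt h)
      -- there are at least two fractional coordinates
      have hF2 : 1 < F.card := by
        by_contra hc
        push_neg at hc
        have hsplit : ∑ j, v j = ∑ j ∈ N \ F, v j + ∑ j ∈ F, v j := by
          rw [Finset.sum_sdiff hFN]
          symm
          apply Finset.sum_subset N.subset_univ
          intro x _ hx
          simp only [hN, mem_filter, mem_univ, true_and, not_not] at hx
          exact hx
        have hcard' : (N \ F).card = N.card - F.card := Finset.card_sdiff_of_subset hFN
        have hge : (s : ℝ) * t < ∑ j, v j := by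
          rw [hsplit]
          have h1' : ∑ j ∈ N \ F, v j = ((N.card - F.card : ℕ) : ℝ) * t := by
            rw [Finset.sum_congr rfl hNFt, ← hcard']; simp [mul_comm]
          rw [h1']
          rcases Nat.le_one_iff_eq_zero_or_eq_one.mp hc with h | h
          · have hF0 : F = ∅ := Finset.card_eq_zero.mp h
            have hsF : ∑ j ∈ F, v j = 0 := by rw [hF0]; simp
            have hn : (s : ℝ) + 1 ≤ ((N.card - F.card : ℕ) : ℝ) := by
              have : s + 1 ≤ N.card - F.card := by omega
              exact_mod_cast this
            rw [hsF]
            nlinarith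
          · obtain ⟨a, ha⟩ := Finset.card_eq_one.mp h
            have hsF : ∑ j ∈ F, v j = v a := by rw [ha]; simp
            have haF : a ∈ F := by rw [ha]; simp
            simp only [hF, mem_filter] at haF
            have hn : (s : ℝ) ≤ ((N.card - F.card : ℕ) : ℝ) := by
              have : s ≤ N.card - F.card := by omega
              exact_mod_cast this
            rw [hsF]
            nlinarith [haF.2.1]
        exact absurd hsum (not_le.mpr hge)
      obtain ⟨i, hi, j, hj, hij⟩ := Finset.one_lt_card.mp hF2
      simp only [hF, mem_filter, mem_univ, true_and] at hi hj
      -- the perturbed vectors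
      set e1 := min (t - v i) (v j) with he1
      set e2 := min (v i) (t - v j) with he2
      have he1p : 0 < e1 := lt_min (by linarith [hi.2]) hj.1
      have he2p : 0 < e2 := lt_min hi.1 (by linarith [hj.2])
      set w : ℝ → Fin d → ℝ :=
        fun e k => if k = i then v i + e else if k = j then v j - e else v k with hw
      have hwi : ∀ e, w e i = v i + e := by intro e; simp [hw]
      have hwj : ∀ e, w e j = v j - e := by intro e; simp [hw, Ne.symm hij]
      have hwo : ∀ e k, k ≠ i → k ≠ j → w e k = v k := by
        intro e k hk hk2; simp [hw, hk, hk2]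
      have hweq : ∀ e k, w e k = v k + ((if k = i then e else 0) + (if k = j then -e else 0)) := by
        intro e k
        by_cases hk : k = i
        · subst hk; rw [hwi, if_pos rfl, if_neg hij]; ring
        · by_cases hk2 : k = j
          · subst hk2; simp [hwj, hk]; ring
          · simp [hwo e k hk hk2, hk, hk2]
      have hwsum : ∀ e, ∑ k, w e k = ∑ k, v k := by
        intro e
        simp [hweq, Finset.sum_add_distrib]
      have hwmem : ∀ e : ℝ, -e2 ≤ e → e ≤ e1 →
          (∀ k, 0 ≤ w e k) ∧ (∀ k, w e k ≤ t) := by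
        intro e hl hr
        constructor <;> intro k
        · by_cases hk : k = i
          · subst hk; rw [hwi]
            have : e2 ≤ v k := min_le_left _ _
            linarith
          · by_cases hk2 : k = j
            · subst hk2; rw [hwj]
              have : e1 ≤ v k := min_le_right _ _
              linarith
            · rw [hwo e k hk hk2]; exact h0 k
        · by_cases hk : k = i
          · subst hk; rw [hwi]
            have : e1 ≤ t - v k := min_le_left _ _
            linarith
          · by_cases hk2 : k = j
            · subst hk2; rw [hwj]
              have : e2 ≤ t - v k := min_le_right _ _
              linarith
            · rw [hwo e k hk hk2]; exact h1 k
      have hwF : ∀ e : ℝ, -e2 ≤ e → e ≤ e1 →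
          (univ.filter (fun k => 0 < w e k ∧ w e k < t)) ⊆ F := by
        intro e _ _ k hk
        simp only [mem_filter, mem_univ, true_and] at hk
        simp only [hF, mem_filter, mem_univ, true_and]
        by_cases hki : k = i
        · subst hki; exact hi
        · by_cases hkj : k = j
          · subst hkj; exact hj
          · rw [hwo e k hki hkj] at hk; exact hk
      -- at the extreme values, a coordinate leaves F
      have hcard1 : (univ.filter (fun k => 0 < w e1 k ∧ w e1 k < t)).card ≤ m := by
        have hss : (univ.filter (fun k => 0 < w e1 k ∧ w e1 k < t)) ⊂ F := by
          apply Finset.ssubset_iff_of_subset (hwF e1 (by linarith) le_rfl) |>.mpr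
          rcases le_total (t - v i) (v j) with h | h
          · refine ⟨i, by simp [hF, hi], ?_⟩
            have : w e1 i = t := by rw [hwi, he1, min_eq_left h]; ring
            simp [this]
          · refine ⟨j, by simp [hF, hj], ?_⟩
            have : w e1 j = 0 := by rw [hwj, he1, min_eq_right h]; ring
            simp [this]
        have := Finset.card_lt_card hss
        omega
      have hcard2 : (univ.filter (fun k => 0 < w (-e2) k ∧ w (-e2) k < t)).card ≤ m := by
        have hss : (univ.filter (fun k => 0 < w (-e2) k ∧ w (-e2) k < t)) ⊂ F := by
          apply Finset.ssubset_iff_of_subset (hwF (-e2) le_rfl (by linarith)) |>.mpr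
          rcases le_total (v i) (t - v j) with h | h
          · refine ⟨i, by simp [hF, hi], ?_⟩
            have : w (-e2) i = 0 := by rw [hwi, he2, min_eq_left h]; ring
            simp [this]
          · refine ⟨j, by simp [hF, hj], ?_⟩
            have : w (-e2) j = t := by rw [hwj, he2, min_eq_right h]; ring
            simp [this]
        have := Finset.card_lt_card hss
        omega
      have hm1 := (hwmem e1 (by linarith) le_rfl)
      have hm2 := (hwmem (-e2) le_rfl (by linarith))
      have hw1 : w e1 ∈ convexHull ℝ (sparseBall d s) :=
        ih (w e1) hm1.1 hm1.2 (by rw [hwsum]; exact hsum) hcard1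
      have hw2 : w (-e2) ∈ convexHull ℝ (sparseBall d s) :=
        ih (w (-e2)) hm2.1 hm2.2 (by rw [hwsum]; exact hsum) hcard2
      -- v is a convex combination of w e1 and w (-e2)
      have hsumpos : 0 < e1 + e2 := by linarith
      have hcomb : (e2 / (e1 + e2)) • w e1 + (e1 / (e1 + e2)) • w (-e2) = v := by
        funext k
        simp only [Pi.add_apply, Pi.smul_apply, smul_eq_mul]
        by_cases hk : k = i
        · subst hk; rw [hwi, hwi]
          field_simp
          ring
        · by_cases hk2 : k = j
          · subst hk2; rw [hwj, hwj]
            field_simp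
            ring
          · rw [hwo _ k hk hk2, hwo _ k hk hk2]
            field_simp
            ring
      rw [← hcomb]
      exact (convex_convexHull ℝ (sparseBall d s)) hw1 hw2
        (div_nonneg he2p.le hsumpos.le) (div_nonneg he1p.le hsumpos.le)
        (by field_simp; ring)

/-- signed version via coordinate sign flips -/
lemma aux_signed {d : ℕ} (s : ℕ) {t : ℝ} (ht : 0 < t) (hst : (s : ℝ) * t ^ 2 ≤ 1)
    (v : Fin d → ℝ) (h1 : ∀ j, |v j| ≤ t) (hsum : (∑ j, |v j|) ≤ (s : ℝ) * t) :
    v ∈ convexHull ℝ (sparseBall d s) := by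
  set σ : Fin d → ℝ := fun j => if v j < 0 then -1 else 1 with hσ
  set L : (Fin d → ℝ) →ₗ[ℝ] (Fin d → ℝ) :=
    LinearMap.pi (fun j => σ j • LinearMap.proj j) with hL
  have hLapp : ∀ (x : Fin d → ℝ) j, L x j = σ j * x j := by
    intro x j; simp [hL]
  have habs : (fun j => |v j|) ∈ convexHull ℝ (sparseBall d s) := by
    apply aux_nonneg s ht hst (univ.filter
      (fun j => 0 < |v j| ∧ |v j| < t)).card _ (fun j => abs_nonneg _) h1 hsum le_rfl
  have hvL : v = L (fun j => |v j|) := by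
    funext j
    rw [hLapp]
    rcases lt_or_ge (v j) 0 with h | h
    · simp [hσ, h, abs_of_neg h]
    · simp [hσ, not_lt.mpr h, abs_of_nonneg h]
  have hLS : L '' (sparseBall d s) ⊆ sparseBall d s := by
    rintro _ ⟨x, hx, rfl⟩
    have hσ2 : ∀ j, σ j ^ 2 = 1 := by
      intro j; simp only [hσ]; split <;> norm_num
    have hσne : ∀ j, σ j ≠ 0 := by
      intro j; simp only [hσ]; split <;> norm_num
    constructor
    · have : {j | L x j ≠ 0} = {j | x j ≠ 0} := by
        ext j; simp [hLapp, hσne j]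
      simpa [l0Norm, this] using hx.1
    · have : ∑ j, (L x j) ^ 2 = ∑ j, (x j) ^ 2 := by
        apply Finset.sum_congr rfl
        intro j _
        rw [hLapp, mul_pow, hσ2 j, one_mul]
      simpa [l2Norm, this] using hx.2
  rw [hvL]
  have : L (fun j => |v j|) ∈ L '' (convexHull ℝ (sparseBall d s)) :=
    Set.mem_image_of_mem _ habs
  rw [L.image_convexHull] at this
  exact convexHull_mono hLS this

/-- For `d ≥ 1` and `s ≥ 1`,
`{z : ‖z‖₁ ≤ √s, ‖z‖₂ ≤ 1} ⊆ 2 · conv(S_{d,s})`,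
where `2 · conv(S_{d,s}) = {2w : w ∈ conv(S_{d,s})}`. -/
theorem relaxedBall_subset_two_smul_convexHull_sparseBall (d s : ℕ)
    (hd : 1 ≤ d) (hs : 1 ≤ s) :
    {z : Fin d → ℝ | l1Norm z ≤ Real.sqrt (s : ℝ) ∧ l2Norm z ≤ 1} ⊆
      (2 : ℝ) • convexHull ℝ (sparseBall d s) := by
  intro z hz
  obtain ⟨hz1, hz2⟩ := hz
  have hs0 : (0 : ℝ) < s := by exact_mod_cast hs
  have hsq : 0 < Real.sqrt s := Real.sqrt_pos.mpr hs0
  set t : ℝ := (Real.sqrt s)⁻¹ with htdef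
  have ht : 0 < t := inv_pos.mpr hsq
  have htsq : t ^ 2 = (s : ℝ)⁻¹ := by
    rw [htdef, inv_pow, Real.sq_sqrt hs0.le]
  have hst : (s : ℝ) * t ^ 2 ≤ 1 := by
    rw [htsq, mul_inv_cancel₀ (ne_of_gt hs0)]
  have hstt : (s : ℝ) * t = Real.sqrt s := by
    rw [htdef]
    field_simp
    rw [Real.sq_sqrt hs0.le]
  -- split z into big and small parts
  set u : Fin d → ℝ := fun j => if t < |z j| then z j else 0 with hu
  set v : Fin d → ℝ := fun j => if t < |z j| then 0 else z j with hv
  have hzuv : z = u + v := by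
    funext j
    by_cases h : t < |z j| <;> simp [hu, hv, h]
  -- the sum of z's absolute values bounds
  have hzsum : ∑ j, |z j| ≤ (s : ℝ) * t := by rw [hstt]; exact hz1
  have hzsq : ∑ j, z j ^ 2 ≤ 1 := by
    have := hz2
    rw [l2Norm, Real.sqrt_le_one] at this
    exact this
  -- u is sparse
  have humem : u ∈ sparseBall d s := by
    set K := univ.filter (fun j => t < |z j|) with hK
    have hKeq : univ.filter (fun j => u j ≠ 0) ⊆ K := by
      intro j hj
      simp only [mem_filter, mem_univ, true_and, hu] at hj
      simp only [hK, mem_filter, mem_univ, true_and]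
      by_contra h
      simp [h] at hj
    have hKcard : K.card ≤ s := by
      have h1 : (K.card : ℝ) * t ≤ ∑ j ∈ K, |z j| := by
        rw [show (K.card : ℝ) * t = ∑ _j ∈ K, t by simp [mul_comm]]
        apply Finset.sum_le_sum
        intro j hj
        simp only [hK, mem_filter] at hj
        exact hj.2.le
      have h2 : ∑ j ∈ K, |z j| ≤ ∑ j, |z j| :=
        Finset.sum_le_sum_of_subset_of_nonneg K.subset_univ
          (fun j _ _ => abs_nonneg _)
      have h3 : (K.card : ℝ) * t ≤ (s : ℝ) * t := le_trans h1 (le_trans h2 hzsum)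
      exact_mod_cast le_of_mul_le_mul_right h3 ht
    apply mem_sparseBall_of (le_trans (Finset.card_le_card hKeq) hKcard)
    calc ∑ j, u j ^ 2 ≤ ∑ j, z j ^ 2 := by
          apply Finset.sum_le_sum
          intro j _
          by_cases h : t < |z j| <;> simp [hu, h, sq_nonneg]
      _ ≤ 1 := hzsq
  -- v is in the convex hull
  have hvmem : v ∈ convexHull ℝ (sparseBall d s) := by
    apply aux_signed s ht hst
    · intro j
      by_cases h : t < |z j|
      · simp [hv, h, ht.le]
      · simp only [hv, if_neg h]
        exact not_lt.mp h
    · calc ∑ j, |v j| ≤ ∑ j, |z j| := by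
            apply Finset.sum_le_sum
            intro j _
            by_cases h : t < |z j| <;> simp [hv, h, abs_nonneg]
        _ ≤ (s : ℝ) * t := hzsum
  -- combine
  have hC : Convex ℝ (convexHull ℝ (sparseBall d s)) := convex_convexHull ℝ _
  have h2eq : (2 : ℝ) • convexHull ℝ (sparseBall d s) =
      convexHull ℝ (sparseBall d s) + convexHull ℝ (sparseBall d s) := by
    rw [show (2 : ℝ) = 1 + 1 by norm_num, hC.add_smul zero_le_one zero_le_one,
      one_smul]
  rw [h2eq, hzuv]
  exact Set.add_mem_add (subset_convexHull ℝ _ humem) hvmem
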